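/- Let γ > 1, let ε > 0 and s > 0, and let W : [0, ∞) → ℝ be C² on [0,1] with W(r) > 0 for r ∈ [0,1), W(1) = 0, W'(0) = 0, W'(1) < 0, and −(W''(r) + W'(r)/r) = W(r)^γ for all r ∈ (0,1). Define V : ℝ² → ℝ by V(x) = (ε/s)^{2/(γ−1)} · W(|x|/s) for |x| ≤ s, and V(x) = (ε/s)^{2/(γ−1)} · W'(1) · ln(|x|/s) for |x| ≥ s. Then V is continuously differentiable on all of ℝ², and at every point x with |x| ≠ s the function V is twice differentiable and satisfies −ΔV(x) = ε^{−2} · (max(V(x), 0))^γ. -/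

import Mathlib

open Set Filter Topology Asymptotics

/-- If `k` is continuous at `x`, `D` is differentiable at `x` and `D x = 0`, then
`z ↦ k z • D z` is differentiable at `x` with derivative `k x • D'`. -/
lemma hasFDerivAt_smul_of_vanish {E F : Type*} [NormedAddCommGroup E] [NormedSpace ℝ E]
    [NormedAddCommGroup F] [NormedSpace ℝ F] {k : E → ℝ} {D : E → F} {D' : E →L[ℝ] F} {x : E}
    (hk : ContinuousAt k x) (hD : HasFDerivAt D D' x) (hD0 : D x = 0) :
    HasFDerivAt (fun z => k z • D z) (k x • D') x := by
  rw [hasFDerivAt_iff_isLittleO_nhds_zero]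
  have hDlittle : (fun h : E => D (x + h) - D x - D' h) =o[𝓝 0] fun h => h := by
    rw [← hasFDerivAt_iff_isLittleO_nhds_zero]; exact hD
  have hDbig : (fun h : E => D (x + h)) =O[𝓝 0] fun h => h := by
    have h2 : (fun h : E => D' h) =O[𝓝 0] fun h => h := D'.isBigO_id _
    have h1 := hDlittle.isBigO.add h2
    simpa [hD0, sub_add_cancel] using h1
  have hksmall : (fun h : E => k (x + h) - k x) =o[𝓝 0] (fun _ => (1 : ℝ)) := by
    rw [isLittleO_one_iff]
    have : Tendsto (fun h : E => k (x + h)) (𝓝 0) (𝓝 (k x)) := by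
      apply hk.tendsto.comp
      exact (continuous_add_left x).tendsto' 0 x (by simp)
    simpa using this.sub_const (k x)
  have key : (fun h : E => (k (x + h) - k x) • D (x + h)) =o[𝓝 0] fun h => h := by
    have := hksmall.smul_isBigO hDbig
    simpa using this
  have key2 : (fun h : E => k x • (D (x + h) - D x - D' h)) =o[𝓝 0] fun h => h :=
    hDlittle.const_smul_left (k x)
  have := key.add key2
  apply this.congr' ?_ (by rfl)
  filter_upwards with h
  simp only [hD0, smul_zero, sub_zero, smul_sub, sub_smul, ContinuousLinearMap.smul_apply]
  module

set_option maxHeartbeats 1000000 in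
set_option synthInstance.maxHeartbeats 200000 in
/-- The regularized vortex building block `V` (rescaled generalized plasma ground state inside
the core `B_s(0)`, logarithmic tail outside) is `C¹` on all of `ℝ²`, and away from the matching
circle `|x| = s` it is twice differentiable and satisfies `-ΔV = ε⁻² (V₊)^γ`. -/
theorem vortex_profile_C1_and_equation (γ ε s : ℝ) (hγ : 1 < γ) (hε : 0 < ε) (hs : 0 < s)
    (W : ℝ → ℝ)
    (hW2 : ContDiffOn ℝ 2 W (Set.Icc 0 1))
    (hWpos : ∀ r ∈ Set.Ico (0 : ℝ) 1, 0 < W r)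
    (hW1 : W 1 = 0)
    (hW'0 : deriv W 0 = 0)
    (hW'1 : deriv W 1 < 0)
    (hODE : ∀ r ∈ Set.Ioo (0 : ℝ) 1,
      -(deriv (deriv W) r + deriv W r / r) = W r ^ γ)
    (V : EuclideanSpace ℝ (Fin 2) → ℝ)
    (hV : ∀ x, V x = if ‖x‖ ≤ s then (ε / s) ^ (2 / (γ - 1)) * W (‖x‖ / s)
      else (ε / s) ^ (2 / (γ - 1)) * deriv W 1 * Real.log (‖x‖ / s)) :
    ContDiff ℝ 1 V ∧
      ∀ x : EuclideanSpace ℝ (Fin 2), ‖x‖ ≠ s →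
        DifferentiableAt ℝ (fderiv ℝ V) x ∧
          -(∑ i : Fin 2, fderiv ℝ (fun z => fderiv ℝ V z (EuclideanSpace.single i 1)) x
              (EuclideanSpace.single i 1))
            = (ε ^ 2)⁻¹ * max (V x) 0 ^ γ := by
  classical
  have hγ1 : (0:ℝ) < γ - 1 := by linarith
  have hγ0 : γ ≠ 0 := by positivity
  have hεs : 0 < ε / s := div_pos hε hs
  have hs2 : (0:ℝ) < s ^ 2 := by positivity
  set c : ℝ := (ε / s) ^ (2 / (γ - 1)) with hcdef
  have hc : 0 < c := Real.rpow_pos_of_pos hεs _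
  set κ : ℝ := deriv W 1 with hκdef
  have hκ : κ < 0 := hW'1
  set I : Set ℝ := Set.Icc 0 1 with hIdef
  have hIu : UniqueDiffOn ℝ I := uniqueDiffOn_Icc one_pos
  set W₁ : ℝ → ℝ := derivWithin W I with hW₁def
  set W₂ : ℝ → ℝ := derivWithin W₁ I with hW₂def
  have h0I : (0:ℝ) ∈ I := ⟨le_refl 0, zero_le_one⟩
  have h1I : (1:ℝ) ∈ I := ⟨zero_le_one, le_refl 1⟩
  obtain ⟨hWdiff, hW₁C1⟩ : DifferentiableOn ℝ W I ∧ ContDiffOn ℝ 1 W₁ I := by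
    have h := (contDiffOn_succ_iff_derivWithin hIu).1
      (by exact_mod_cast hW2 : ContDiffOn ℝ (1 + 1) W I)
    exact ⟨h.1, h.2.2⟩
  obtain ⟨hW₁diff, hW₂cont⟩ : DifferentiableOn ℝ W₁ I ∧ ContinuousOn W₂ I := by
    have h := (contDiffOn_succ_iff_derivWithin hIu).1
      (by exact_mod_cast hW₁C1 : ContDiffOn ℝ (0 + 1) W₁ I)
    exact ⟨h.1, by simpa [contDiffOn_zero] using h.2.2⟩
  have hWc : ContinuousOn W I := hW2.continuousOn
  have hW₁c : ContinuousOn W₁ I := hW₁C1.continuousOn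
  have hInb : ∀ r ∈ Set.Ioo (0:ℝ) 1, I ∈ 𝓝 r := fun r hr => Icc_mem_nhds hr.1 hr.2
  have hWW₁ : ∀ r ∈ Set.Ioo (0:ℝ) 1, HasDerivAt W (W₁ r) r := by
    intro r hr
    have hd : DifferentiableAt ℝ W r :=
      (hWdiff r (Ioo_subset_Icc_self hr)).differentiableAt (hInb r hr)
    rw [hW₁def, derivWithin_of_mem_nhds (hInb r hr)]
    exact hd.hasDerivAt
  have hW₁W₂ : ∀ r ∈ Set.Ioo (0:ℝ) 1, HasDerivAt W₁ (W₂ r) r := by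
    intro r hr
    have hd : DifferentiableAt ℝ W₁ r :=
      (hW₁diff r (Ioo_subset_Icc_self hr)).differentiableAt (hInb r hr)
    rw [hW₂def, derivWithin_of_mem_nhds (hInb r hr)]
    exact hd.hasDerivAt
  have hODE' : ∀ r ∈ Set.Ioo (0:ℝ) 1, -(W₂ r + W₁ r / r) = W r ^ γ := by
    intro r hr
    have h1 : deriv W r = W₁ r := (hWW₁ r hr).deriv
    have h2 : deriv (deriv W) r = W₂ r := by
      have heq : deriv W =ᶠ[𝓝 r] W₁ := by
        filter_upwards [isOpen_Ioo.mem_nhds hr] with y hy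
        exact (hWW₁ y hy).deriv
      rw [heq.deriv_eq]
      exact (hW₁W₂ r hr).deriv
    rw [← hODE r hr, h1, h2]
  have hWat1 : DifferentiableAt ℝ W 1 := by
    by_contra h
    rw [hκdef, deriv_zero_of_not_differentiableAt h] at hκ
    exact lt_irrefl _ hκ
  have hW₁1 : W₁ 1 = κ := hWat1.derivWithin (hIu 1 h1I)
  have hW0pos : 0 < W 0 := hWpos 0 ⟨le_refl 0, one_pos⟩
  -- limits from the right at 0
  have hnhds_le : 𝓝[>] (0:ℝ) ≤ 𝓝[I] 0 := by
    rw [← nhdsWithin_Ioo_eq_nhdsGT one_pos]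
    exact nhdsWithin_mono 0 Ioo_subset_Icc_self
  have hIoo_mem : Set.Ioo (0:ℝ) 1 ∈ 𝓝[>] (0:ℝ) := Ioo_mem_nhdsGT one_pos
  have hWtend : Tendsto W (𝓝[>] (0:ℝ)) (𝓝 (W 0)) := (hWc 0 h0I).mono_left hnhds_le
  have hW₂tend : Tendsto W₂ (𝓝[>] (0:ℝ)) (𝓝 (W₂ 0)) := (hW₂cont 0 h0I).mono_left hnhds_le
  have hrpow : Tendsto (fun r => W r ^ γ) (𝓝[>] (0:ℝ)) (𝓝 (W 0 ^ γ)) :=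
    (Real.continuousAt_rpow_const (W 0) γ (Or.inl (ne_of_gt hW0pos))).tendsto.comp hWtend
  have hW₁0 : W₁ 0 = 0 := by
    have hlim1 : Tendsto W₁ (𝓝[>] (0:ℝ)) (𝓝 (W₁ 0)) := (hW₁c 0 h0I).mono_left hnhds_le
    have hlim2 : Tendsto (fun r => r * (-(W r ^ γ) - W₂ r)) (𝓝[>] (0:ℝ)) (𝓝 0) := by
      have hid : Tendsto (fun r : ℝ => r) (𝓝[>] (0:ℝ)) (𝓝 0) :=
        Filter.tendsto_id.mono_right nhdsWithin_le_nhds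
      simpa using hid.mul (hrpow.neg.sub hW₂tend)
    have heq : Tendsto W₁ (𝓝[>] (0:ℝ)) (𝓝 0) := by
      apply hlim2.congr'
      filter_upwards [hIoo_mem] with r hr
      have h := hODE' r hr
      have hr0 : r ≠ 0 := ne_of_gt hr.1
      have h1 : W₁ r / r = -(W r ^ γ) - W₂ r := by linarith
      calc r * (-(W r ^ γ) - W₂ r) = r * (W₁ r / r) := by rw [h1]
        _ = W₁ r := by field_simp
    exact tendsto_nhds_unique hlim1 heq
  have hslope : Tendsto (fun ρ => W₁ ρ / ρ) (𝓝[>] (0:ℝ)) (𝓝 (W₂ 0)) := by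
    have hd : HasDerivWithinAt W₁ (W₂ 0) I 0 := (hW₁diff 0 h0I).hasDerivWithinAt
    have h1 := hasDerivWithinAt_iff_tendsto_slope.1 hd
    have hmono : 𝓝[>] (0:ℝ) ≤ 𝓝[I \ {0}] 0 := by
      rw [← nhdsWithin_Ioo_eq_nhdsGT one_pos]
      apply nhdsWithin_mono
      intro y hy
      exact ⟨Ioo_subset_Icc_self hy, ne_of_gt hy.1⟩
    apply (h1.mono_left hmono).congr'
    filter_upwards [self_mem_nhdsWithin] with r _
    rw [slope_def_field, hW₁0, sub_zero, sub_zero]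
  have hW₂0 : 2 * W₂ 0 = -(W 0 ^ γ) := by
    have hA : Tendsto (fun r => W₂ r + W₁ r / r) (𝓝[>] (0:ℝ)) (𝓝 (W₂ 0 + W₂ 0)) :=
      hW₂tend.add hslope
    have hB : Tendsto (fun r => W₂ r + W₁ r / r) (𝓝[>] (0:ℝ)) (𝓝 (-(W 0 ^ γ))) := by
      apply hrpow.neg.congr'
      filter_upwards [hIoo_mem] with r hr
      have h := hODE' r hr
      linarith
    have := tendsto_nhds_unique hA hB
    linarith
  -- the scaling identity
  have hscale : (ε ^ 2)⁻¹ * c ^ γ = c / s ^ 2 := by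
    have h1 : c ^ (γ - 1) = ε ^ 2 / s ^ 2 := by
      rw [hcdef, ← Real.rpow_mul hεs.le, div_mul_cancel₀ _ (ne_of_gt hγ1)]
      rw [show ((2:ℝ)) = ((2:ℕ):ℝ) by norm_num, Real.rpow_natCast, div_pow]
    have h2 : c ^ γ = c ^ (γ - 1) * c := by
      nth_rewrite 1 [show γ = (γ - 1) + 1 by ring]
      rw [Real.rpow_add hc, Real.rpow_one]
    rw [h2, h1]
    have hε0 : (ε:ℝ) ≠ 0 := ne_of_gt hε
    have hs0 : (s:ℝ) ≠ 0 := ne_of_gt hs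
    field_simp
  have hscale' : ∀ X : ℝ, (ε ^ 2)⁻¹ * (c ^ γ * X) = c / s ^ 2 * X := fun X => by
    rw [← mul_assoc, hscale]
  -- the 1-D profile G and its derivative G₁
  set d0 : ℝ := c * W₂ 0 / (2 * s ^ 2) with hd0def
  set G : ℝ → ℝ := fun t => if t ≤ 0 then c * W 0 + d0 * t
    else if t ≤ s ^ 2 then c * W (Real.sqrt t / s)
    else c * κ / 2 * (Real.log t - Real.log (s ^ 2)) with hGdef
  set G₁ : ℝ → ℝ := fun t => if t ≤ 0 then d0
    else if t ≤ s ^ 2 then c / (2 * s ^ 2) * (W₁ (Real.sqrt t / s) / (Real.sqrt t / s))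
    else c * κ / (2 * t) with hG₁def
  have hρ_mem : ∀ t ∈ Set.Ioo 0 (s^2), Real.sqrt t / s ∈ Set.Ioo (0:ℝ) 1 := by
    intro t ht
    constructor
    · exact div_pos (Real.sqrt_pos.2 ht.1) hs
    · rw [div_lt_one hs]
      calc Real.sqrt t < Real.sqrt (s^2) := Real.sqrt_lt_sqrt ht.1.le ht.2
        _ = s := Real.sqrt_sq hs.le
  have hinner : ∀ t ∈ Set.Ioo 0 (s^2), HasDerivAt (fun u => c * W (Real.sqrt u / s))
      (c / (2 * s ^ 2) * (W₁ (Real.sqrt t / s) / (Real.sqrt t / s))) t := by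
    intro t ht
    have hρm := hρ_mem t ht
    have h1 : HasDerivAt (fun u => Real.sqrt u / s) (1 / (2 * Real.sqrt t) / s) t :=
      (Real.hasDerivAt_sqrt (ne_of_gt ht.1)).div_const s
    have h2 : HasDerivAt W (W₁ (Real.sqrt t / s)) ((fun u => Real.sqrt u / s) t) :=
      hWW₁ _ hρm
    have h3 := (h2.comp t h1).const_mul c
    refine h3.congr_deriv ?_
    have hst : Real.sqrt t ≠ 0 := ne_of_gt (Real.sqrt_pos.2 ht.1)
    have hs0 : (s:ℝ) ≠ 0 := ne_of_gt hs
    field_simp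
  have hρtend : Tendsto (fun u => Real.sqrt u / s) (𝓝[>] (0:ℝ)) (𝓝[>] (0:ℝ)) := by
    rw [tendsto_nhdsWithin_iff]
    constructor
    · have h := (Real.continuous_sqrt.div_const s).tendsto 0
      simp only [Real.sqrt_zero, zero_div] at h
      exact h.mono_left nhdsWithin_le_nhds
    · filter_upwards [self_mem_nhdsWithin] with u hu
      exact div_pos (Real.sqrt_pos.2 hu) hs
  have hψ : Tendsto (fun u => W₁ (Real.sqrt u / s) / (Real.sqrt u / s)) (𝓝[>] (0:ℝ))
      (𝓝 (W₂ 0)) := by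
    have := hslope.comp hρtend
    exact this
  have hs0 : (s:ℝ) ≠ 0 := ne_of_gt hs
  have hGIcc : ∀ u ∈ Set.Icc (0:ℝ) (s^2), G u = c * W (Real.sqrt u / s) := by
    intro u hu
    simp only [hGdef]
    rcases eq_or_lt_of_le hu.1 with h0 | h0
    · rw [if_pos (le_of_eq h0.symm), ← h0, Real.sqrt_zero, zero_div, mul_zero, add_zero]
    · rw [if_neg (not_le.2 h0), if_pos hu.2]
  have hGIci : ∀ u ∈ Set.Ici (s^2), G u = c * κ / 2 * (Real.log u - Real.log (s^2)) := by
    intro u hu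
    simp only [hGdef]
    rcases eq_or_lt_of_le (Set.mem_Ici.1 hu) with h0 | h0
    · rw [if_neg (not_le.2 (lt_of_lt_of_le hs2 (Set.mem_Ici.1 hu))), if_pos (le_of_eq h0.symm), ← h0]
      simp [hW1, Real.sqrt_sq hs.le, div_self hs0]
    · rw [if_neg (not_le.2 (lt_trans hs2 h0)), if_neg (not_le.2 h0)]
  have hright0 : HasDerivWithinAt G d0 (Set.Icc 0 (s^2)) 0 := by
    rw [hasDerivWithinAt_iff_tendsto_slope, Set.Icc_diff_left,
      nhdsWithin_Ioc_eq_nhdsGT hs2]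
    have hlh : Tendsto (fun u => (c * W (Real.sqrt u / s) - c * W 0) / u) (𝓝[>] (0:ℝ))
        (𝓝 d0) := by
      apply HasDerivAt.lhopital_zero_right_on_Ioo
        (f' := fun u => c / (2 * s ^ 2) * (W₁ (Real.sqrt u / s) / (Real.sqrt u / s)))
        (g' := fun _ => (1:ℝ)) hs2
      · intro u hu; exact (hinner u hu).sub_const (c * W 0)
      · intro u _; exact hasDerivAt_id u
      · intro u _; norm_num
      · have hmemI : Tendsto (fun u => Real.sqrt u / s) (𝓝[>] (0:ℝ)) (𝓝[I] 0) := by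
          rw [tendsto_nhdsWithin_iff]
          constructor
          · have h := (Real.continuous_sqrt.div_const s).tendsto 0
            simp only [Real.sqrt_zero, zero_div] at h
            exact h.mono_left nhdsWithin_le_nhds
          · filter_upwards [Ioo_mem_nhdsGT hs2] with u hu
            exact ⟨(div_pos (Real.sqrt_pos.2 hu.1) hs).le, ((hρ_mem u hu).2).le⟩
        have hWtends : Tendsto (fun u => W (Real.sqrt u / s)) (𝓝[>] (0:ℝ)) (𝓝 (W 0)) :=
          (hWc 0 h0I).tendsto.comp hmemI
        simpa using (hWtends.const_mul c).sub_const (c * W 0)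
      · exact Filter.tendsto_id.mono_right nhdsWithin_le_nhds
      · simp only [div_one]
        have h := hψ.const_mul (c / (2 * s ^ 2))
        have hd0' : d0 = c / (2 * s ^ 2) * W₂ 0 := by rw [hd0def]; ring
        rw [hd0']
        exact h
    apply hlh.congr'
    filter_upwards [Ioo_mem_nhdsGT hs2] with u hu
    rw [slope_def_field, hGIcc u (Set.Ioo_subset_Icc_self hu), hGIcc 0 ⟨le_refl 0, hs2.le⟩,
      Real.sqrt_zero, zero_div, sub_zero]
  have hlogd : ∀ u : ℝ, 0 < u →
      HasDerivAt (fun v => c * κ / 2 * (Real.log v - Real.log (s^2))) (c * κ / 2 * u⁻¹) u :=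
    fun u hu =>
      ((Real.hasDerivAt_log (ne_of_gt hu)).sub_const (Real.log (s^2))).const_mul (c * κ / 2)
  have hWsq : HasDerivAt (fun u => c * W (Real.sqrt u / s)) (c * κ / (2 * s ^ 2)) (s ^ 2) := by
    have h1 : HasDerivAt (fun u => Real.sqrt u / s) (1 / (2 * Real.sqrt (s^2)) / s) (s^2) :=
      (Real.hasDerivAt_sqrt (ne_of_gt hs2)).div_const s
    have h2 : HasDerivAt W κ ((fun u => Real.sqrt u / s) (s^2)) := by
      have hpt : (fun u => Real.sqrt u / s) (s^2) = 1 := by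
        simp [Real.sqrt_sq hs.le, div_self hs0]
      rw [hpt, hκdef]
      exact hWat1.hasDerivAt
    have h3 := (h2.comp (s^2) h1).const_mul c
    refine h3.congr_deriv ?_
    rw [Real.sqrt_sq hs.le, div_div, one_div]
    ring
  have hGat_s2 : HasDerivAt G (c * κ / (2 * s ^ 2)) (s ^ 2) := by
    have hL : HasDerivWithinAt G (c * κ / (2 * s ^ 2)) (Set.Icc 0 (s^2)) (s^2) :=
      hWsq.hasDerivWithinAt.congr (fun u hu => hGIcc u hu)
        (hGIcc _ ⟨hs2.le, le_refl _⟩)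
    have hR : HasDerivWithinAt G (c * κ / (2 * s ^ 2)) (Set.Ici (s^2)) (s^2) := by
      have hval : c * κ / 2 * (s^2)⁻¹ = c * κ / (2 * s ^ 2) := by ring
      exact hval ▸ ((hlogd (s^2) hs2).hasDerivWithinAt.congr
        (fun u hu => hGIci u hu) (hGIci _ Set.self_mem_Ici))
    apply (hL.union hR).hasDerivAt
    apply mem_of_superset (Ici_mem_nhds hs2)
    intro u hu
    rcases le_total u (s^2) with h | h
    · exact Or.inl ⟨hu, h⟩
    · exact Or.inr h
  have hGat0 : HasDerivAt G d0 0 := by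
    have haff : ∀ u : ℝ, HasDerivAt (fun v : ℝ => c * W 0 + d0 * v) d0 u := fun u => by
      simpa using ((hasDerivAt_id u).const_mul d0).const_add (c * W 0)
    have hL : HasDerivWithinAt G d0 (Set.Iic 0) 0 :=
      (haff 0).hasDerivWithinAt.congr
        (fun u hu => by simp only [hGdef]; rw [if_pos (Set.mem_Iic.1 hu)])
        (by simp only [hGdef]; rw [if_pos le_rfl])
    apply (hL.union hright0).hasDerivAt
    apply mem_of_superset (Iic_mem_nhds hs2)
    intro u hu
    rcases le_total u 0 with h | h
    · exact Or.inl h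
    · exact Or.inr ⟨h, hu⟩
  have hG₁s2 : G₁ (s^2) = c * κ / (2 * s ^ 2) := by
    simp only [hG₁def]
    rw [if_neg (not_le.2 hs2), if_pos le_rfl, Real.sqrt_sq hs.le, div_self hs0, hW₁1, div_one]
    ring
  have hGderiv : ∀ t, HasDerivAt G (G₁ t) t := by
    intro t
    rcases lt_trichotomy t 0 with h0 | h0 | h0
    · have hval : G₁ t = d0 := by simp only [hG₁def]; rw [if_pos h0.le]
      rw [hval]
      have haff : HasDerivAt (fun v : ℝ => c * W 0 + d0 * v) d0 t := by
        simpa using ((hasDerivAt_id t).const_mul d0).const_add (c * W 0)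
      apply haff.congr_of_eventuallyEq
      filter_upwards [Iio_mem_nhds h0] with u hu
      simp only [hGdef]; rw [if_pos (le_of_lt hu)]
    · subst h0
      have hval : G₁ 0 = d0 := by simp only [hG₁def]; rw [if_pos le_rfl]
      rw [hval]; exact hGat0
    · rcases lt_trichotomy t (s^2) with h2 | h2 | h2
      · have hmem : t ∈ Set.Ioo 0 (s^2) := ⟨h0, h2⟩
        have hval : G₁ t = c / (2 * s ^ 2) * (W₁ (Real.sqrt t / s) / (Real.sqrt t / s)) := by
          simp only [hG₁def]; rw [if_neg (not_le.2 h0), if_pos h2.le]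
        rw [hval]
        apply (hinner t hmem).congr_of_eventuallyEq
        filter_upwards [isOpen_Ioo.mem_nhds hmem] with u hu
        exact hGIcc u (Set.Ioo_subset_Icc_self hu)
      · subst h2
        rw [hG₁s2]; exact hGat_s2
      · have hval : G₁ t = c * κ / (2 * t) := by
          simp only [hG₁def]
          rw [if_neg (not_le.2 (lt_trans hs2 h2)), if_neg (not_le.2 h2)]
        rw [hval]
        have hd := hlogd t (lt_trans hs2 h2)
        have hval2 : c * κ / 2 * t⁻¹ = c * κ / (2 * t) := by ring
        rw [← hval2]
        apply hd.congr_of_eventuallyEq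
        filter_upwards [Ioi_mem_nhds h2] with u hu
        exact hGIci u (Set.mem_Ici.2 (le_of_lt hu))
  have hG₁cont : Continuous G₁ := by
    rw [continuous_iff_continuousAt]
    intro t
    rcases lt_trichotomy t 0 with h0 | h0 | h0
    · have hev : (fun _ : ℝ => d0) =ᶠ[𝓝 t] G₁ := by
        filter_upwards [Iio_mem_nhds h0] with u hu
        simp only [hG₁def]; rw [if_pos hu.le]
      exact (continuousAt_congr hev).1 continuousAt_const
    · subst h0
      have hval : G₁ 0 = d0 := by simp only [hG₁def]; rw [if_pos le_rfl]
      unfold ContinuousAt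
      rw [hval, ← nhdsLE_sup_nhdsGT (0:ℝ), tendsto_sup]
      constructor
      · exact tendsto_nhdsWithin_congr
          (fun u hu => by simp only [hG₁def]; rw [if_pos (Set.mem_Iic.1 hu)]) tendsto_const_nhds
      · have h := hψ.const_mul (c / (2 * s ^ 2))
        have hd0' : d0 = c / (2 * s ^ 2) * W₂ 0 := by rw [hd0def]; ring
        rw [hd0']
        apply h.congr'
        filter_upwards [Ioo_mem_nhdsGT hs2] with u hu
        simp only [hG₁def]; rw [if_neg (not_le.2 hu.1), if_pos hu.2.le]
    · rcases lt_trichotomy t (s^2) with h2 | h2 | h2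
      · have hmem : t ∈ Set.Ioo 0 (s^2) := ⟨h0, h2⟩
        have hev : (fun u => c / (2 * s ^ 2) * (W₁ (Real.sqrt u / s) / (Real.sqrt u / s)))
            =ᶠ[𝓝 t] G₁ := by
          filter_upwards [isOpen_Ioo.mem_nhds hmem] with u hu
          simp only [hG₁def]; rw [if_neg (not_le.2 hu.1), if_pos hu.2.le]
        apply (continuousAt_congr hev).1
        have hρc : ContinuousAt (fun u : ℝ => Real.sqrt u / s) t :=
          (Real.continuous_sqrt.div_const s).continuousAt
        have hW₁at : ContinuousAt W₁ (Real.sqrt t / s) :=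
          (hW₁W₂ _ (hρ_mem t hmem)).differentiableAt.continuousAt
        have hcomp : ContinuousAt (fun u : ℝ => W₁ (Real.sqrt u / s)) t :=
          ContinuousAt.comp (g := W₁) (f := fun u : ℝ => Real.sqrt u / s) hW₁at hρc
        exact continuousAt_const.mul (hcomp.div hρc (ne_of_gt (hρ_mem t hmem).1))
      · subst h2
        unfold ContinuousAt
        rw [hG₁s2, ← nhdsLE_sup_nhdsGT ((s:ℝ)^2), tendsto_sup]
        constructor
        · have hρlim : Tendsto (fun u : ℝ => Real.sqrt u / s) (𝓝[≤] (s^2)) (𝓝 1) := by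
            have h := (Real.continuous_sqrt.div_const s).tendsto (s^2)
            rw [Real.sqrt_sq hs.le, div_self hs0] at h
            exact h.mono_left nhdsWithin_le_nhds
          have hmemI : Tendsto (fun u : ℝ => Real.sqrt u / s) (𝓝[≤] (s^2)) (𝓝[I] 1) := by
            rw [tendsto_nhdsWithin_iff]
            refine ⟨hρlim, ?_⟩
            filter_upwards [mem_nhdsWithin_of_mem_nhds (Ici_mem_nhds hs2),
              self_mem_nhdsWithin] with u hu1 hu2
            constructor
            · positivity
            · rw [div_le_one hs]
              calc Real.sqrt u ≤ Real.sqrt (s^2) := Real.sqrt_le_sqrt hu2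
                _ = s := Real.sqrt_sq hs.le
          have hW₁lim : Tendsto (fun u : ℝ => W₁ (Real.sqrt u / s)) (𝓝[≤] (s^2)) (𝓝 κ) := by
            have h := (hW₁c 1 h1I).tendsto.comp hmemI
            rwa [hW₁1] at h
          have hdiv := (hW₁lim.div hρlim one_ne_zero).const_mul (c / (2 * s ^ 2))
          have hval : c * κ / (2 * s ^ 2) = c / (2 * s ^ 2) * (κ / 1) := by
            rw [div_one]; ring
          rw [hval]
          apply hdiv.congr'
          filter_upwards [mem_nhdsWithin_of_mem_nhds (Ioi_mem_nhds hs2),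
            self_mem_nhdsWithin] with u hu1 hu2
          simp only [Pi.div_apply, hG₁def]
          rw [if_neg (not_le.2 (Set.mem_Ioi.1 hu1)), if_pos (Set.mem_Iic.1 hu2)]
        · have hlim : Tendsto (fun u : ℝ => c * κ / (2 * u)) (𝓝[>] (s^2))
              (𝓝 (c * κ / (2 * s^2))) := by
            apply Tendsto.mono_left ?_ nhdsWithin_le_nhds
            exact (continuousAt_const.div ((continuous_const.mul continuous_id).continuousAt)
              (by positivity))
          apply hlim.congr'
          filter_upwards [self_mem_nhdsWithin] with u hu
          simp only [hG₁def]
          rw [if_neg (not_le.2 (lt_trans hs2 hu)), if_neg (not_le.2 (hu : s^2 < u))]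
      · have hev : (fun u : ℝ => c * κ / (2 * u)) =ᶠ[𝓝 t] G₁ := by
          filter_upwards [Ioi_mem_nhds h2] with u hu
          simp only [hG₁def]
          rw [if_neg (not_le.2 (lt_trans hs2 hu)), if_neg (not_le.2 hu)]
        apply (continuousAt_congr hev).1
        exact continuousAt_const.div ((continuous_const.mul continuous_id).continuousAt)
          (by positivity)
  have hVG : V = fun x => G (‖x‖ ^ 2) := by
    funext x
    rw [hV x]
    by_cases hxs : ‖x‖ ≤ s
    · rw [if_pos hxs]
      have h2 : ‖x‖ ^ 2 ≤ s ^ 2 := pow_le_pow_left₀ (norm_nonneg x) hxs 2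
      by_cases h0 : ‖x‖ ^ 2 ≤ 0
      · have h20 : ‖x‖ ^ 2 = 0 := le_antisymm h0 (by positivity)
        have hx0 : ‖x‖ = 0 := pow_eq_zero_iff two_ne_zero |>.1 h20
        simp only [hGdef]
        rw [if_pos h0, h20, hx0, zero_div, mul_zero, add_zero]
      · simp only [hGdef]
        rw [if_neg h0, if_pos h2, Real.sqrt_sq (norm_nonneg x)]
    · rw [if_neg hxs]
      push_neg at hxs
      have hx0 : (0:ℝ) < ‖x‖ := lt_trans hs hxs
      have h0 : ¬ ‖x‖ ^ 2 ≤ 0 := not_le.2 (by positivity)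
      have h2 : ¬ ‖x‖ ^ 2 ≤ s ^ 2 := not_le.2 (pow_lt_pow_left₀ hxs hs.le two_ne_zero)
      simp only [hGdef]
      rw [if_neg h0, if_neg h2]
      rw [Real.log_div (ne_of_gt hx0) hs0, Real.log_pow, Real.log_pow]
      push_cast
      ring
  -- C¹ regularity
  have hGC1 : ContDiff ℝ 1 G := contDiff_one_iff_deriv.mpr
    ⟨fun t => (hGderiv t).differentiableAt,
     hG₁cont.congr fun t => ((hGderiv t).deriv).symm⟩
  have hq : ∀ z : EuclideanSpace ℝ (Fin 2),
      HasFDerivAt (fun y : EuclideanSpace ℝ (Fin 2) => ‖y‖ ^ 2) (2 • innerSL ℝ z) z :=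
    fun z => (hasStrictFDerivAt_norm_sq z).hasFDerivAt
  have hC1V : ContDiff ℝ 1 V := by
    rw [hVG]; exact hGC1.comp (contDiff_norm_sq (𝕜 := ℝ))
  have hVd : ∀ z, HasFDerivAt V (G₁ (‖z‖ ^ 2) • (2 • innerSL ℝ z)) z := by
    intro z
    rw [hVG]
    exact (hGderiv _).comp_hasFDerivAt z (hq z)
  have hfder : ∀ z, fderiv ℝ V z = G₁ (‖z‖ ^ 2) • (2 • innerSL ℝ z) := fun z => (hVd z).fderiv
  have happ : ∀ (z : EuclideanSpace ℝ (Fin 2)) (i : Fin 2),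
      fderiv ℝ V z (EuclideanSpace.single i 1) = G₁ (‖z‖ ^ 2) * (2 * z i) := by
    intro z i
    rw [hfder z]
    have h1 : (inner ℝ z (EuclideanSpace.single i (1:ℝ)) : ℝ) = z i := by
      rw [real_inner_comm, EuclideanSpace.inner_single_left]; simp
    simp only [ContinuousLinearMap.smul_apply, innerSL_apply_apply, smul_eq_mul, nsmul_eq_mul,
      Nat.cast_ofNat]
    rw [h1]
  refine ⟨hC1V, fun x hx => ?_⟩
  have hxsum : x 0 ^ 2 + x 1 ^ 2 = ‖x‖ ^ 2 := by
    rw [EuclideanSpace.norm_eq, Real.sq_sqrt (by positivity)]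
    simp [Fin.sum_univ_two, Real.norm_eq_abs, sq_abs]
  have hDdiff : Differentiable ℝ (fderiv ℝ (fun y : EuclideanSpace ℝ (Fin 2) => ‖y‖ ^ 2)) := by
    have h2 : ContDiff ℝ 2 (fun y : EuclideanSpace ℝ (Fin 2) => ‖y‖ ^ 2) :=
      contDiff_norm_sq (𝕜 := ℝ)
    exact (h2.fderiv_right (m := 1) (by norm_num)).differentiable one_ne_zero
  have hrwV : fderiv ℝ V = fun z => G₁ (‖z‖ ^ 2) •
      fderiv ℝ (fun y : EuclideanSpace ℝ (Fin 2) => ‖y‖ ^ 2) z := by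
    funext z; rw [hfder z, (hq z).fderiv]
  have hproj : ∀ (i : Fin 2) (z : EuclideanSpace ℝ (Fin 2)),
      HasFDerivAt (fun y : EuclideanSpace ℝ (Fin 2) => (2:ℝ) * y i)
        ((2:ℝ) • (EuclideanSpace.proj i : EuclideanSpace ℝ (Fin 2) →L[ℝ] ℝ)) z :=
    fun i z => ((EuclideanSpace.proj (𝕜 := ℝ) i).hasFDerivAt).const_mul 2
  have main : ∀ g₂ : ℝ, x ≠ 0 → HasDerivAt G₁ g₂ (‖x‖ ^ 2) →
      DifferentiableAt ℝ (fderiv ℝ V) x ∧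
        (∑ i : Fin 2, fderiv ℝ (fun z => fderiv ℝ V z (EuclideanSpace.single i 1)) x
            (EuclideanSpace.single i 1)) = 4 * G₁ (‖x‖ ^ 2) + 4 * ‖x‖ ^ 2 * g₂ := by
    intro g₂ _hx0 hg₂
    have hk : HasFDerivAt (fun z : EuclideanSpace ℝ (Fin 2) => G₁ (‖z‖ ^ 2))
        (g₂ • (2 • innerSL ℝ x)) x := hg₂.comp_hasFDerivAt (h₂ := G₁) x (hq x)
    constructor
    · rw [hrwV]
      exact hk.differentiableAt.smul (hDdiff x)
    · have hterm : ∀ i : Fin 2,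
          fderiv ℝ (fun z => fderiv ℝ V z (EuclideanSpace.single i 1)) x
              (EuclideanSpace.single i 1)
            = 2 * G₁ (‖x‖ ^ 2) + 4 * g₂ * (x i) ^ 2 := by
        intro i
        have hFeq : (fun z => fderiv ℝ V z (EuclideanSpace.single i 1))
            = fun z => G₁ (‖z‖ ^ 2) * (2 * z i) := funext fun z => happ z i
        rw [hFeq]
        have hmul : HasFDerivAt (fun z : EuclideanSpace ℝ (Fin 2) => G₁ (‖z‖ ^ 2) * (2 * z i)) _ x :=
          hk.mul (hproj i x)
        rw [hmul.fderiv]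
        have h2 : (innerSL ℝ x) (EuclideanSpace.single i (1:ℝ)) = x i := by
          rw [innerSL_apply_apply, real_inner_comm, EuclideanSpace.inner_single_left]; simp
        have h3 : (EuclideanSpace.proj i : EuclideanSpace ℝ (Fin 2) →L[ℝ] ℝ)
            (EuclideanSpace.single i 1) = 1 := by
          simp [EuclideanSpace.proj, EuclideanSpace.single_apply]
        simp only [ContinuousLinearMap.add_apply, ContinuousLinearMap.smul_apply, h2, h3,
          smul_eq_mul, nsmul_eq_mul, Nat.cast_ofNat]
        ring
      rw [Fin.sum_univ_two, hterm 0, hterm 1, ← hxsum]; ring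
  rcases lt_or_gt_of_ne hx with hlt | hgt
  · -- inside the vortex core
    by_cases hx0 : x = 0
    · subst hx0
      have hnorm0 : ‖(0 : EuclideanSpace ℝ (Fin 2))‖ = 0 := norm_zero
      have hk0 : ContinuousAt (fun z : EuclideanSpace ℝ (Fin 2) => G₁ (‖z‖ ^ 2)) 0 :=
        (hG₁cont.comp (continuous_norm.pow 2)).continuousAt
      have hD00 : fderiv ℝ (fun y : EuclideanSpace ℝ (Fin 2) => ‖y‖ ^ 2) 0 = 0 := by
        rw [(hq 0).fderiv]; simp
      constructor
      · rw [hrwV]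
        exact (hasFDerivAt_smul_of_vanish hk0 (hDdiff 0).hasFDerivAt hD00).differentiableAt
      · have hterm : ∀ i : Fin 2,
            fderiv ℝ (fun z => fderiv ℝ V z (EuclideanSpace.single i 1)) 0
                (EuclideanSpace.single i 1) = 2 * G₁ 0 := by
          intro i
          have hFeq : (fun z : EuclideanSpace ℝ (Fin 2) =>
              fderiv ℝ V z (EuclideanSpace.single i 1))
              = fun z => G₁ (‖z‖ ^ 2) • ((2:ℝ) * z i) := by
            funext z; rw [happ z i, smul_eq_mul]
          rw [hFeq]
          have h0 : (2:ℝ) * (0 : EuclideanSpace ℝ (Fin 2)) i = 0 := by simp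
          have hF := hasFDerivAt_smul_of_vanish hk0 (hproj i 0) h0
          rw [hF.fderiv]
          have h3 : (EuclideanSpace.proj i : EuclideanSpace ℝ (Fin 2) →L[ℝ] ℝ)
              (EuclideanSpace.single i 1) = 1 := by
            simp [EuclideanSpace.proj, EuclideanSpace.single_apply]
          simp only [ContinuousLinearMap.smul_apply, h3, smul_eq_mul, hnorm0]
          norm_num [mul_comm]
        rw [Fin.sum_univ_two, hterm 0, hterm 1]
        have hG₁0 : G₁ 0 = d0 := by simp only [hG₁def]; rw [if_pos le_rfl]
        have hV0 : V 0 = c * W 0 := by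
          rw [hV 0, if_pos (by rw [hnorm0]; exact hs.le)]
          rw [hnorm0, zero_div]
        rw [hG₁0, hV0, max_eq_left (mul_pos hc hW0pos).le,
          Real.mul_rpow hc.le hW0pos.le, hscale', hd0def]
        have hss : s ^ 2 ≠ 0 := ne_of_gt hs2
        field_simp
        linear_combination (-1) * hW₂0
    · -- inside, away from the origin
      have hn : 0 < ‖x‖ := norm_pos_iff.2 hx0
      have htI : ‖x‖ ^ 2 ∈ Set.Ioo (0:ℝ) (s ^ 2) :=
        ⟨by positivity, by exact pow_lt_pow_left₀ hlt (norm_nonneg x) two_ne_zero⟩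
      have hsq : Real.sqrt (‖x‖ ^ 2) = ‖x‖ := Real.sqrt_sq (norm_nonneg x)
      have hρ : ‖x‖ / s ∈ Set.Ioo (0:ℝ) 1 := ⟨by positivity, by rw [div_lt_one hs]; exact hlt⟩
      have hρ0 : ‖x‖ / s ≠ 0 := ne_of_gt hρ.1
      have hG₁d : HasDerivAt G₁
          (c / (2 * s ^ 2) * ((W₂ (‖x‖ / s) * (‖x‖ / s) - W₁ (‖x‖ / s) * 1) / (‖x‖ / s) ^ 2
            * (1 / (2 * ‖x‖) / s))) (‖x‖ ^ 2) := by
        have hev : G₁ =ᶠ[𝓝 (‖x‖ ^ 2)]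
            (fun u => c / (2 * s ^ 2) * (W₁ (Real.sqrt u / s) / (Real.sqrt u / s))) := by
          filter_upwards [isOpen_Ioo.mem_nhds htI] with u hu
          simp only [hG₁def]
          rw [if_neg (not_le.2 hu.1), if_pos hu.2.le]
        have h1 : HasDerivAt (fun u => Real.sqrt u / s) (1 / (2 * ‖x‖) / s) (‖x‖ ^ 2) := by
          have := (Real.hasDerivAt_sqrt (ne_of_gt htI.1)).div_const s
          rwa [hsq] at this
        have h2 : HasDerivAt (fun y => W₁ y / y)
            ((W₂ (‖x‖ / s) * (‖x‖ / s) - W₁ (‖x‖ / s) * 1) / (‖x‖ / s) ^ 2) (‖x‖ / s) :=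
          (hW₁W₂ _ hρ).div (hasDerivAt_id _) hρ0
        have h3 : HasDerivAt (fun u => W₁ (Real.sqrt u / s) / (Real.sqrt u / s))
            ((W₂ (‖x‖ / s) * (‖x‖ / s) - W₁ (‖x‖ / s) * 1) / (‖x‖ / s) ^ 2
              * (1 / (2 * ‖x‖) / s)) (‖x‖ ^ 2) := by
          have h2' : HasDerivAt (fun y => W₁ y / y)
              ((W₂ (‖x‖ / s) * (‖x‖ / s) - W₁ (‖x‖ / s) * 1) / (‖x‖ / s) ^ 2)
              ((fun u => Real.sqrt u / s) (‖x‖ ^ 2)) := by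
            simp only [hsq]; exact h2
          have := h2'.comp (‖x‖ ^ 2) h1
          exact this
        exact (h3.const_mul (c / (2 * s ^ 2))).congr_of_eventuallyEq hev
      obtain ⟨hdiff, hsum⟩ := main _ hx0 hG₁d
      refine ⟨hdiff, ?_⟩
      rw [hsum]
      have hG₁t : G₁ (‖x‖ ^ 2) = c / (2 * s ^ 2) * (W₁ (‖x‖ / s) / (‖x‖ / s)) := by
        simp only [hG₁def]
        rw [if_neg (not_le.2 htI.1), if_pos htI.2.le, hsq]
      have hWρpos : 0 < W (‖x‖ / s) := hWpos _ ⟨hρ.1.le, hρ.2⟩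
      have hVx : V x = c * W (‖x‖ / s) := by rw [hV x, if_pos hlt.le]
      rw [hG₁t, hVx, max_eq_left (mul_pos hc hWρpos).le,
        Real.mul_rpow hc.le hWρpos.le, ← hODE' _ hρ, hscale']
      have hx2 : ‖x‖ ^ 2 = s ^ 2 * (‖x‖ / s) ^ 2 := by field_simp
      rw [hx2]
      have h0 : (‖x‖ : ℝ) ≠ 0 := ne_of_gt hn
      have hs0 : (s : ℝ) ≠ 0 := ne_of_gt hs
      field_simp
      ring
  · -- outside the vortex core
    have hx0 : x ≠ 0 := by
      intro h; rw [h, norm_zero] at hgt; exact absurd hgt (not_lt.2 hs.le)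
    have htO : s ^ 2 < ‖x‖ ^ 2 := pow_lt_pow_left₀ hgt hs.le two_ne_zero
    have ht0 : (0:ℝ) < ‖x‖ ^ 2 := lt_trans hs2 htO
    have hG₁d : HasDerivAt G₁ (c * κ / 2 * -((‖x‖ ^ 2) ^ 2)⁻¹) (‖x‖ ^ 2) := by
      have hev : G₁ =ᶠ[𝓝 (‖x‖ ^ 2)] (fun u => c * κ / 2 * u⁻¹) := by
        filter_upwards [isOpen_Ioi.mem_nhds htO] with u hu
        have hu0 : (0:ℝ) < u := lt_trans hs2 hu
        simp only [hG₁def]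
        rw [if_neg (not_le.2 hu0), if_neg (not_le.2 hu)]
        rw [div_eq_mul_inv, mul_inv]
        ring
      exact ((hasDerivAt_inv (ne_of_gt ht0)).const_mul (c * κ / 2)).congr_of_eventuallyEq hev
    obtain ⟨hdiff, hsum⟩ := main _ hx0 hG₁d
    refine ⟨hdiff, ?_⟩
    rw [hsum]
    have hG₁t : G₁ (‖x‖ ^ 2) = c * κ / (2 * ‖x‖ ^ 2) := by
      simp only [hG₁def]
      rw [if_neg (not_le.2 ht0), if_neg (not_le.2 htO)]
    have hVx : V x < 0 := by
      rw [hV x, if_neg (not_le.2 hgt)]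
      exact mul_neg_of_neg_of_pos (mul_neg_of_pos_of_neg hc hκ)
        (Real.log_pos ((one_lt_div hs).2 hgt))
    rw [hG₁t, max_eq_right hVx.le, Real.zero_rpow hγ0, mul_zero]
    have h0 : (‖x‖ : ℝ) ≠ 0 := ne_of_gt (lt_trans hs hgt)
    field_simp
    ring
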